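/- If V ⊆ Bⁿ (n ≥ 3) is a set of 2n points with all pairwise distances ≥ √2, and V₀ ⊆ V is a minimal subset with circumradius 1, then V₀ consists of two antipodal points {x, −x} with ‖x‖ = 1, and the remaining 2n−2 points of V lie on the great (n−2)-sphere {y : ‖y‖ = 1, ⟨x,y⟩ = 0}. -/

import Mathlib

open RealInnerProductSpace Submodule Module Finset

section Aux

variable {E : Type*} [NormedAddCommGroup E] [InnerProductSpace ℝ E]

private lemma mul_nonneg_of_nonpos_nonpos' {x y : ℝ} (hx : x ≤ 0) (hy : y ≤ 0) :
    0 ≤ x * y := by nlinarith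

private lemma proj_inner (v w w' : E) (hv : v ≠ 0) :
    ⟪w - (⟪v, w⟫ / ‖v‖ ^ 2) • v, w' - (⟪v, w'⟫ / ‖v‖ ^ 2) • v⟫
      = ⟪w, w'⟫ - ⟪v, w⟫ * ⟪v, w'⟫ / ‖v‖ ^ 2 := by
  have hv2 : ‖v‖ ^ 2 ≠ 0 := pow_ne_zero _ (norm_ne_zero_iff.mpr hv)
  simp only [inner_sub_left, inner_sub_right, real_inner_smul_left, real_inner_smul_right,
    real_inner_self_eq_norm_sq]
  rw [real_inner_comm w v]
  field_simp
  ring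

private lemma core_lemma (d : ℕ) (S : Finset E) (v : E) (hv : v ∈ S)
    (h0 : ∀ u ∈ S, u ≠ 0)
    (hneg : ∀ u ∈ S, ∀ w ∈ S, u ≠ w → ⟪u, w⟫ ≤ 0)
    (hrank : finrank ℝ (span ℝ (S : Set E)) ≤ d + 1)
    (IH : ∀ T : Finset E, (∀ u ∈ T, u ≠ 0) →
      (∀ u ∈ T, ∀ w ∈ T, u ≠ w → ⟪u, w⟫ ≤ 0) →
      finrank ℝ (span ℝ (T : Set E)) ≤ d → T.card ≤ 2 * d) :
    S.card ≤ 2 * (d + 1) ∧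
      (S.card = 2 * (d + 1) → ∃ w ∈ S, ∃ t : ℝ, t < 0 ∧ w = t • v) := by
  classical
  have hv0 : v ≠ 0 := h0 v hv
  have hnv2 : (0:ℝ) < ‖v‖ ^ 2 := by
    have := norm_pos_iff.mpr hv0
    positivity
  set f : E → E := fun w => w - (⟪v, w⟫ / ‖v‖ ^ 2) • v with hf
  have hff : ∀ w w' : E, ⟪f w, f w'⟫ = ⟪w, w'⟫ - ⟪v, w⟫ * ⟪v, w'⟫ / ‖v‖ ^ 2 :=
    fun w w' => proj_inner v w w' hv0
  have hfv : ∀ w : E, ⟪v, f w⟫ = 0 := by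
    intro w
    simp only [hf, inner_sub_right, real_inner_smul_right, real_inner_self_eq_norm_sq]
    field_simp
    ring
  -- inner products with v are nonpositive on S.erase v
  have hvw : ∀ w ∈ S.erase v, ⟪v, w⟫ ≤ 0 := by
    intro w hw
    exact hneg v hv w (mem_of_mem_erase hw) (fun h => (ne_of_mem_erase hw) h.symm)
  have hvwlt : ∀ w ∈ S.erase v, f w = 0 → ⟪v, w⟫ < 0 := by
    intro w hw hfw
    rcases lt_or_eq_of_le (hvw w hw) with h | h
    · exact h
    · exfalso
      apply h0 w (mem_of_mem_erase hw)
      have hfww : f w = w := by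
        simp only [hf]
        rw [h, zero_div, zero_smul, sub_zero]
      rw [← hfww, hfw]
  set N : Finset E := (S.erase v).filter (fun w => f w = 0) with hN
  set S' : Finset E := (S.erase v).filter (fun w => ¬ f w = 0) with hS'
  have hNcard : N.card ≤ 1 := by
    refine card_le_one.mpr ?_
    intro w hw w' hw'
    simp only [hN, mem_filter] at hw hw'
    by_contra hne
    have h1 : ⟪w, w'⟫ ≤ 0 :=
      hneg w (mem_of_mem_erase hw.1) w' (mem_of_mem_erase hw'.1) hne
    have h2 := hff w w'
    rw [hw.2, hw'.2, inner_zero_left] at h2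
    have h3 : ⟪v, w⟫ < 0 := hvwlt w hw.1 hw.2
    have h4 : ⟪v, w'⟫ < 0 := hvwlt w' hw'.1 hw'.2
    have h5 : 0 < ⟪v, w⟫ * ⟪v, w'⟫ / ‖v‖ ^ 2 :=
      div_pos (mul_pos_of_neg_of_neg h3 h4) hnv2
    linarith
  have hinj : Set.InjOn f S' := by
    intro w hw w' hw' heq
    simp only [hS', coe_filter, Set.mem_setOf_eq] at hw hw'
    by_contra hne
    have h1 : ⟪w, w'⟫ ≤ 0 :=
      hneg w (mem_of_mem_erase hw.1) w' (mem_of_mem_erase hw'.1) hne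
    have h2 := hff w w'
    rw [heq, real_inner_self_eq_norm_sq] at h2
    have h3 : (0:ℝ) < ‖f w'‖ ^ 2 := pow_pos (norm_pos_iff.mpr hw'.2) 2
    have h5 : 0 ≤ ⟪v, w⟫ * ⟪v, w'⟫ / ‖v‖ ^ 2 :=
      div_nonneg (mul_nonneg_of_nonpos_nonpos' (hvw w hw.1) (hvw w' hw'.1)) hnv2.le
    linarith
  set T : Finset E := S'.image f with hT
  have hTcard : T.card = S'.card := card_image_of_injOn hinj
  have hT0 : ∀ u ∈ T, u ≠ 0 := by
    intro u hu
    simp only [hT, mem_image] at hu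
    obtain ⟨w, hw, rfl⟩ := hu
    simp only [hS', mem_filter] at hw
    exact hw.2
  have hTneg : ∀ u ∈ T, ∀ w ∈ T, u ≠ w → ⟪u, w⟫ ≤ 0 := by
    intro u hu w hw hne
    simp only [hT, mem_image] at hu hw
    obtain ⟨w₁, hw₁, rfl⟩ := hu
    obtain ⟨w₂, hw₂, rfl⟩ := hw
    have hne' : w₁ ≠ w₂ := fun h => hne (by rw [h])
    simp only [hS', mem_filter] at hw₁ hw₂
    have h1 : ⟪w₁, w₂⟫ ≤ 0 :=
      hneg w₁ (mem_of_mem_erase hw₁.1) w₂ (mem_of_mem_erase hw₂.1) hne'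
    have h5 : 0 ≤ ⟪v, w₁⟫ * ⟪v, w₂⟫ :=
      mul_nonneg_of_nonpos_nonpos' (hvw w₁ hw₁.1) (hvw w₂ hw₂.1)
    rw [hff]
    have : 0 ≤ ⟪v, w₁⟫ * ⟪v, w₂⟫ / ‖v‖ ^ 2 := div_nonneg h5 (le_of_lt hnv2)
    linarith
  -- rank bound for T
  have hTorth : span ℝ (T : Set E) ≤ (ℝ ∙ v)ᗮ := by
    rw [span_le]
    intro x hx
    simp only [hT, coe_image, Set.mem_image] at hx
    obtain ⟨w, _, rfl⟩ := hx
    exact Submodule.mem_orthogonal_singleton_iff_inner_right.mpr (hfv w)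
  have hTin : span ℝ (T : Set E) ≤ span ℝ (S : Set E) := by
    rw [span_le]
    intro x hx
    simp only [hT, coe_image, Set.mem_image] at hx
    obtain ⟨w, hw, rfl⟩ := hx
    have hwS : w ∈ S := by
      simp only [hS', mem_coe, mem_filter] at hw
      exact mem_of_mem_erase hw.1
    exact sub_mem (subset_span hwS) (smul_mem _ _ (subset_span hv))
  have hvin : (ℝ ∙ v) ≤ span ℝ (S : Set E) :=
    span_le.mpr (Set.singleton_subset_iff.mpr (subset_span hv))
  have hdisj : Disjoint (span ℝ (T : Set E)) (ℝ ∙ v) :=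
    (((ℝ ∙ v).orthogonal_disjoint.mono_right hTorth).symm)
  have hrankT : finrank ℝ (span ℝ (T : Set E)) ≤ d := by
    have heq := Submodule.finrank_sup_add_finrank_inf_eq (span ℝ (T : Set E)) (ℝ ∙ v)
    rw [hdisj.eq_bot, finrank_bot, add_zero, finrank_span_singleton hv0] at heq
    have hle : finrank ℝ ↑(span ℝ (T : Set E) ⊔ (ℝ ∙ v)) ≤ finrank ℝ (span ℝ (S : Set E)) :=
      Submodule.finrank_mono (sup_le hTin hvin)
    omega
  have hTcard2 : T.card ≤ 2 * d := IH T hT0 hTneg hrankT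
  have hsplit : N.card + S'.card = (S.erase v).card :=
    card_filter_add_card_filter_not (fun w => f w = 0)
  have hScard : S.card = (S.erase v).card + 1 := by
    rw [card_erase_of_mem hv]
    have : 0 < S.card := card_pos.mpr ⟨v, hv⟩
    omega
  constructor
  · omega
  · intro hcard
    have hN1 : 1 ≤ N.card := by omega
    obtain ⟨w, hw⟩ := card_pos.mp (by omega : 0 < N.card)
    simp only [hN, mem_filter] at hw
    refine ⟨w, mem_of_mem_erase hw.1, ⟪v, w⟫ / ‖v‖ ^ 2, ?_, ?_⟩
    · exact div_neg_of_neg_of_pos (hvwlt w hw.1 hw.2) hnv2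
    · have := hw.2
      simp only [hf] at this
      exact sub_eq_zero.mp this

private lemma lemB : ∀ (d : ℕ) (S : Finset E), (∀ u ∈ S, u ≠ 0) →
    (∀ u ∈ S, ∀ w ∈ S, u ≠ w → ⟪u, w⟫ ≤ 0) →
    finrank ℝ (span ℝ (S : Set E)) ≤ d → S.card ≤ 2 * d := by
  intro d
  induction d with
  | zero =>
    intro S h0 _ hrank
    have hbot : span ℝ (S : Set E) = ⊥ :=
      (Submodule.finrank_eq_zero (R := ℝ) (M := E)).mp (Nat.le_zero.mp hrank)
    have : S = ∅ := by
      refine eq_empty_iff_forall_notMem.mpr (fun u hu => h0 u hu ?_)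
      have h' : u ∈ span ℝ (S : Set E) := Submodule.subset_span hu
      rw [hbot, Submodule.mem_bot] at h'
      exact h'
    simp [this]
  | succ d ih =>
    intro S h0 hneg hrank
    rcases S.eq_empty_or_nonempty with h | ⟨v, hv⟩
    · simp [h]
    · exact (core_lemma d S v hv h0 hneg hrank (fun T a b c => ih T a b c)).1

private lemma lemK (d : ℕ) (S : Finset E) (h0 : ∀ u ∈ S, u ≠ 0)
    (hneg : ∀ u ∈ S, ∀ w ∈ S, u ≠ w → ⟪u, w⟫ ≤ 0)
    (hrank : finrank ℝ (span ℝ (S : Set E)) ≤ d + 1)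
    (hcard : S.card = 2 * (d + 1)) (v : E) (hv : v ∈ S) :
    ∃ w ∈ S, ∃ t : ℝ, t < 0 ∧ w = t • v :=
  (core_lemma d S v hv h0 hneg hrank (fun T a b c => lemB d T a b c)).2 hcard

end Aux

/-- The circumradius of a set: the infimum of radii of closed balls containing it. -/
noncomputable def circumradius {n : ℕ} (A : Set (EuclideanSpace ℝ (Fin n))) : ℝ :=
  sInf {r : ℝ | ∃ c : EuclideanSpace ℝ (Fin n), A ⊆ Metric.closedBall c r}

section Circ

variable {n : ℕ}

private lemma circ_pair (u v : EuclideanSpace ℝ (Fin n)) :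
    circumradius ({u, v} : Set (EuclideanSpace ℝ (Fin n))) = dist u v / 2 := by
  apply le_antisymm
  · apply csInf_le
    · refine ⟨0, fun r hr => ?_⟩
      obtain ⟨c, hc⟩ := hr
      exact le_trans dist_nonneg (hc (Set.mem_insert u {v}))
    · refine ⟨(2⁻¹ : ℝ) • (u + v), ?_⟩
      intro x hx
      rcases hx with rfl | hx
      · rw [Metric.mem_closedBall, dist_eq_norm]
        have h1 : x - (2⁻¹ : ℝ) • (x + v) = (2⁻¹ : ℝ) • (x - v) := by module
        rw [h1, norm_smul, Real.norm_eq_abs, abs_of_nonneg (by norm_num : (0:ℝ) ≤ 2⁻¹),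
          ← dist_eq_norm]
        linarith
      · rcases hx with rfl
        rw [Metric.mem_closedBall, dist_eq_norm]
        have h1 : x - (2⁻¹ : ℝ) • (u + x) = (2⁻¹ : ℝ) • (x - u) := by module
        rw [h1, norm_smul, Real.norm_eq_abs, abs_of_nonneg (by norm_num : (0:ℝ) ≤ 2⁻¹),
          ← dist_eq_norm, dist_comm x u]
        linarith
  · apply le_csInf
    · exact ⟨dist u v, u, by
        intro x hx
        rcases hx with rfl | hx
        · simp [dist_nonneg]
        · rcases hx with rfl
          simp [dist_comm]⟩
    · rintro r ⟨c, hc⟩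
      have h1 : dist u c ≤ r := hc (Set.mem_insert u {v})
      have h2 : dist v c ≤ r := hc (Set.mem_insert_of_mem u rfl)
      have := dist_triangle u c v
      rw [dist_comm c v] at this
      linarith
  
private lemma circ_single_le (u : EuclideanSpace ℝ (Fin n)) :
    circumradius ({u} : Set (EuclideanSpace ℝ (Fin n))) ≤ 0 := by
  apply csInf_le
  · refine ⟨0, fun r hr => ?_⟩
    obtain ⟨c, hc⟩ := hr
    exact le_trans dist_nonneg (hc rfl)
  · exact ⟨u, by simp⟩

private lemma circ_empty : circumradius (∅ : Set (EuclideanSpace ℝ (Fin n))) = 0 := by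
  have : {r : ℝ | ∃ c : EuclideanSpace ℝ (Fin n), (∅ : Set (EuclideanSpace ℝ (Fin n))) ⊆ Metric.closedBall c r} = Set.univ := by
    ext r
    simp only [Set.mem_setOf_eq, Set.mem_univ, iff_true]
    exact ⟨0, Set.empty_subset _⟩
  rw [circumradius, this]
  apply Real.sInf_of_not_bddBelow
  rintro ⟨b, hb⟩
  have := hb (Set.mem_univ (b - 1))
  linarith

end Circ

set_option maxHeartbeats 2000000 in
theorem minimal_circumradius_subset_antipodal (n : ℕ) (hn : 3 ≤ n)
    (V V₀ : Finset (EuclideanSpace ℝ (Fin n)))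
    (hcard : V.card = 2 * n)
    (hball : ∀ v ∈ V, ‖v‖ ≤ 1)
    (hdist : ∀ u ∈ V, ∀ v ∈ V, u ≠ v → Real.sqrt 2 ≤ dist u v)
    (hsub : V₀ ⊆ V)
    (hr : circumradius (V₀ : Set (EuclideanSpace ℝ (Fin n))) = 1)
    (hmin : ∀ W : Finset (EuclideanSpace ℝ (Fin n)), W ⊆ V →
      circumradius (W : Set (EuclideanSpace ℝ (Fin n))) = 1 → V₀.card ≤ W.card) :
    ∃ x : EuclideanSpace ℝ (Fin n), ‖x‖ = 1 ∧
      (V₀ : Set (EuclideanSpace ℝ (Fin n))) = {x, -x} ∧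
      ∀ v ∈ V, v ∉ V₀ → ‖v‖ = 1 ∧ inner ℝ x v = (0 : ℝ) := by
  classical
  -- basic distance facts
  have hdist2 : ∀ u ∈ V, ∀ v ∈ V, u ≠ v → 2 ≤ ‖u - v‖ ^ 2 := by
    intro u hu v hv hne
    have h := hdist u hu v hv hne
    rw [dist_eq_norm] at h
    nlinarith [Real.sq_sqrt (by norm_num : (0:ℝ) ≤ 2), Real.sqrt_nonneg 2]
  have h0 : ∀ v ∈ V, v ≠ 0 := by
    intro v hv hv0
    have h6 : 1 < V.card := by omega
    obtain ⟨u, hu, hune⟩ := Finset.exists_mem_ne h6 v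
    have := hdist2 u hu v hv hune
    rw [hv0, sub_zero] at this
    nlinarith [hball u hu, norm_nonneg u]
  have hneg : ∀ u ∈ V, ∀ v ∈ V, u ≠ v → ⟪u, v⟫ ≤ 0 := by
    intro u hu v hv hne
    have h := hdist2 u hu v hv hne
    rw [norm_sub_sq_real] at h
    nlinarith [hball u hu, hball v hv, norm_nonneg u, norm_nonneg v]
  -- find an antipodal pair in V
  have hVne : V.Nonempty := Finset.card_pos.mp (by omega)
  obtain ⟨a, ha⟩ := hVne
  have ha0 : a ≠ 0 := h0 a ha
  have hrank : finrank ℝ (span ℝ (V : Set (EuclideanSpace ℝ (Fin n)))) ≤ (n - 1) + 1 := by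
    have h1 : finrank ℝ (span ℝ (V : Set (EuclideanSpace ℝ (Fin n)))) ≤
        finrank ℝ (EuclideanSpace ℝ (Fin n)) := Submodule.finrank_le _
    rw [finrank_euclideanSpace_fin] at h1
    omega
  obtain ⟨b, hb, t, ht, hbt⟩ := lemK (n - 1) V h0 hneg hrank (by omega) a ha
  have hba : b ≠ a := by
    intro h
    apply ha0
    have : (1 - t) • a = 0 := by
      rw [sub_smul, one_smul, ← hbt, h, sub_self]
    rcases smul_eq_zero.mp this with h' | h'
    · exfalso; nlinarith
    · exact h'
  -- find c ∈ V not parallel to a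
  have hexc : ∃ c ∈ V, ¬ ∃ s : ℝ, c = s • a := by
    by_contra hc
    push_neg at hc
    have hpar : ∀ c ∈ V, ∃ s : ℝ, s ≠ 0 ∧ c = s • a := by
      intro c hcV
      obtain ⟨s, hs⟩ := hc c hcV
      refine ⟨s, fun h => h0 c hcV (by rw [hs, h, zero_smul]), hs⟩
    -- get a third element
    have h2lt : 2 < V.card := by omega
    have hz : ((V.erase a).erase b).Nonempty := by
      apply Finset.card_pos.mp
      have h1 : (V.erase a).card = V.card - 1 := Finset.card_erase_of_mem ha
      have hbea : b ∈ V.erase a := Finset.mem_erase.mpr ⟨hba, hb⟩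
      have h2 : ((V.erase a).erase b).card = (V.erase a).card - 1 :=
        Finset.card_erase_of_mem hbea
      omega
    obtain ⟨z, hz⟩ := hz
    have hzb : z ≠ b := Finset.ne_of_mem_erase hz
    have hza : z ≠ a := Finset.ne_of_mem_erase (Finset.mem_of_mem_erase hz)
    have hzV : z ∈ V := Finset.mem_of_mem_erase (Finset.mem_of_mem_erase hz)
    obtain ⟨sa, hsa0, hsa⟩ := hpar a ha
    obtain ⟨sb, hsb0, hsb⟩ := hpar b hb
    obtain ⟨sz, hsz0, hsz⟩ := hpar z hzV
    have hna2 : (0:ℝ) < ‖a‖ ^ 2 := pow_pos (norm_pos_iff.mpr ha0) 2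
    have key : ∀ x y : EuclideanSpace ℝ (Fin n), ∀ sx sy : ℝ, x ∈ V → y ∈ V → x ≠ y →
        x = sx • a → y = sy • a → sx * sy < 0 := by
      intro x y sx sy hx hy hxy hsx hsy
      have h := hneg x hx y hy hxy
      rw [hsx, hsy, real_inner_smul_left, real_inner_smul_right,
        real_inner_self_eq_norm_sq] at h
      have hxne : sx ≠ 0 := fun h' => h0 x hx (by rw [hsx, h', zero_smul])
      have hyne : sy ≠ 0 := fun h' => h0 y hy (by rw [hsy, h', zero_smul])
      have : sx * sy ≤ 0 := by nlinarith
      rcases lt_or_eq_of_le this with h' | h'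
      · exact h'
      · exact (mul_ne_zero hxne hyne h').elim
    have h1 := key a b sa sb ha hb (Ne.symm hba) hsa hsb
    have h2 := key a z sa sz ha hzV (Ne.symm hza) hsa hsz
    have h3 := key b z sb sz hb hzV (Ne.symm hzb) hsb hsz
    have p1 : 0 < (sa * sb) * (sa * sz) := mul_pos_of_neg_of_neg h1 h2
    have p2 : sa ^ 2 * (sb * sz) ≤ 0 := by nlinarith [sq_nonneg sa]
    nlinarith
  obtain ⟨c, hcV, hcpar⟩ := hexc
  have hca : c ≠ a := fun h => hcpar ⟨1, by rw [h, one_smul]⟩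
  have hcb : c ≠ b := fun h => hcpar ⟨t, by rw [h, hbt]⟩
  have hac0 : ⟪a, c⟫ = 0 := by
    have h1 : ⟪a, c⟫ ≤ 0 := hneg a ha c hcV (Ne.symm hca)
    have h2 : ⟪b, c⟫ ≤ 0 := hneg b hb c hcV (Ne.symm hcb)
    rw [hbt, real_inner_smul_left] at h2
    nlinarith
  have hsq : ∀ x y : EuclideanSpace ℝ (Fin n), x ∈ V → y ∈ V → x ≠ y → ⟪x, y⟫ = 0 →
      ‖x‖ = 1 := by
    intro x y hx hy hxy hxyinner
    have h := hdist2 x hx y hy hxy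
    rw [norm_sub_sq_real, hxyinner] at h
    have h1 := hball x hx
    have h2 := hball y hy
    have h3 := norm_nonneg x
    have h4 := norm_nonneg y
    nlinarith
  have hna : ‖a‖ = 1 := hsq a c ha hcV (Ne.symm hca) hac0
  have hnc : ‖c‖ = 1 := hsq c a hcV ha hca (by rw [real_inner_comm]; exact hac0)
  have hbc0 : ⟪b, c⟫ = 0 := by rw [hbt, real_inner_smul_left, hac0, mul_zero]
  have hnb : ‖b‖ = 1 := hsq b c hb hcV (Ne.symm hcb) hbc0
  have hbna : b = -a := by
    have : ‖b‖ = |t| * ‖a‖ := by rw [hbt, norm_smul, Real.norm_eq_abs]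
    rw [hna, hnb, mul_one, abs_of_neg ht] at this
    have ht1 : t = -1 := by linarith
    rw [hbt, ht1, neg_one_smul]
  have hnaV : -a ∈ V := hbna ▸ hb
  -- card V₀ = 2
  have haa : a ≠ -a := by
    intro h
    apply ha0
    have h2 : a + a = 0 := by nth_rewrite 1 [h]; exact neg_add_cancel a
    have h3 : (2:ℝ) • a = 0 := by rw [two_smul]; exact h2
    rcases smul_eq_zero.mp h3 with h' | h'
    · norm_num at h'
    · exact h'
  have hW : ({a, -a} : Finset (EuclideanSpace ℝ (Fin n))) ⊆ V := by
    intro x hx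
    rcases Finset.mem_insert.mp hx with rfl | hx
    · exact ha
    · rw [Finset.mem_singleton] at hx
      rw [hx]; exact hnaV
  have hWcirc : circumradius (({a, -a} : Finset (EuclideanSpace ℝ (Fin n))) :
      Set (EuclideanSpace ℝ (Fin n))) = 1 := by
    have hcoe : (({a, -a} : Finset (EuclideanSpace ℝ (Fin n))) :
        Set (EuclideanSpace ℝ (Fin n))) = {a, -a} := by simp
    rw [hcoe, circ_pair, dist_eq_norm, sub_neg_eq_add, ← two_smul ℝ, norm_smul, hna]
    norm_num
  have hWcard : ({a, -a} : Finset (EuclideanSpace ℝ (Fin n))).card = 2 := by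
    rw [Finset.card_insert_of_notMem (fun h => haa (Finset.mem_singleton.mp h)),
      Finset.card_singleton]
  have hV0le : V₀.card ≤ 2 := hWcard ▸ hmin _ hW hWcirc
  have hV0ge : 2 ≤ V₀.card := by
    by_contra h
    push_neg at h
    interval_cases hc : V₀.card
    · have : V₀ = ∅ := Finset.card_eq_zero.mp hc
      rw [this] at hr
      simp only [Finset.coe_empty] at hr
      rw [circ_empty] at hr
      norm_num at hr
    · obtain ⟨u, hu⟩ := Finset.card_eq_one.mp hc
      rw [hu] at hr
      simp only [Finset.coe_singleton] at hr
      have := circ_single_le (n := n) u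
      rw [hr] at this
      norm_num at this
  obtain ⟨u, v, huv, hV0⟩ := Finset.card_eq_two.mp (le_antisymm hV0le hV0ge)
  have huV : u ∈ V := hsub (hV0 ▸ Finset.mem_insert_self u {v})
  have hvV : v ∈ V := hsub (hV0 ▸ Finset.mem_insert_of_mem (Finset.mem_singleton_self v))
  have hdistuv : dist u v = 2 := by
    rw [hV0] at hr
    have hcoe : (({u, v} : Finset (EuclideanSpace ℝ (Fin n))) :
        Set (EuclideanSpace ℝ (Fin n))) = {u, v} := by simp
    rw [hcoe, circ_pair] at hr
    linarith
  have hnormuv : ‖u - v‖ = 2 := by rw [← dist_eq_norm, hdistuv]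
  have hinnermin : ⟪u, v⟫ ≥ -(‖u‖ * ‖v‖) := by
    have := real_inner_le_norm (-u) v
    rw [inner_neg_left, norm_neg] at this
    linarith
  have hnu : ‖u‖ = 1 := by
    have h : ‖u - v‖ ^ 2 = 4 := by rw [hnormuv]; norm_num
    rw [norm_sub_sq_real] at h
    nlinarith [hball u huV, hball v hvV, norm_nonneg u, norm_nonneg v]
  have hnv : ‖v‖ = 1 := by
    have h : ‖u - v‖ ^ 2 = 4 := by rw [hnormuv]; norm_num
    rw [norm_sub_sq_real] at h
    nlinarith [hball u huV, hball v hvV, norm_nonneg u, norm_nonneg v]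
  have hvnu : v = -u := by
    have h : ‖u - v‖ ^ 2 = 4 := by rw [hnormuv]; norm_num
    rw [norm_sub_sq_real] at h
    have hinner : ⟪u, v⟫ = -1 := by nlinarith [hnu, hnv]
    have hsum : ‖u + v‖ ^ 2 = 0 := by
      rw [norm_add_sq_real, hnu, hnv, hinner]; norm_num
    have : u + v = 0 := by
      have := pow_eq_zero_iff (n := 2) (by norm_num) |>.mp (by
        rw [← hsum])
      exact norm_eq_zero.mp this
    exact (neg_eq_of_add_eq_zero_right this).symm
  refine ⟨u, hnu, ?_, ?_⟩
  · rw [hV0, hvnu]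
    simp
  · intro w hwV hwV0
    have hwu : w ≠ u := fun h => hwV0 (h ▸ hV0 ▸ Finset.mem_insert_self u {v})
    have hwv : w ≠ v := fun h =>
      hwV0 (h ▸ hV0 ▸ Finset.mem_insert_of_mem (Finset.mem_singleton_self v))
    have h1 := hdist2 w hwV u huV hwu
    have h2 := hdist2 w hwV v hvV hwv
    rw [hvnu, sub_neg_eq_add] at h2
    rw [norm_sub_sq_real] at h1
    rw [norm_add_sq_real] at h2
    have hwnorm : ‖w‖ = 1 := by
      nlinarith [hball w hwV, norm_nonneg w, hnu]
    constructor
    · exact hwnorm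
    · have : ⟪w, u⟫ = 0 := by nlinarith [hnu]
      rw [real_inner_comm] at this
      exact this
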